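/- Let F be a field, q_1,…,q_n nonzero pairwise distinct elements of F, χ_1,…,χ_n ∈ F, and ħ ∈ F. Let M(χ) be the n×n matrix over F with entries M(χ)_{ii} = χ_i and M(χ)_{ij} = ħ/(1 − q_i/q_j) for i ≠ j. Then det(M(χ)) equals the sum, over all involutions π of {1,…,n}, of J(π)·V(π), where J(π) = ∏_{i : π(i)=i} χ_i and V(π) = ∏_{pairs i<j with π(i)=j} ħ² q_i q_j/(q_i − q_j)². -/

import Mathlib

namespace CombEkAux

open Finset Equiv Equiv.Perm

variable {F : Type*} [Field F] {n : ℕ}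

/-- matrix entry: row `i`, column `j`. -/
def ent (q χ : Fin n → F) (ℏ : F) (i j : Fin n) : F :=
  if i = j then χ j else ℏ / (1 - q i / q j)

/-- the set of points lying on a cycle of length at least 3 -/
def longSet (σ : Perm (Fin n)) : Finset (Fin n) :=
  univ.filter fun i => σ (σ i) ≠ i

lemma mem_longSet {σ : Perm (Fin n)} {i} : i ∈ longSet σ ↔ σ (σ i) ≠ i := by
  simp [longSet]

lemma longSet_nonempty_iff {σ : Perm (Fin n)} : (longSet σ).Nonempty ↔ ¬ σ * σ = 1 := by
  constructor
  · rintro ⟨i, hi⟩ h1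
    rw [mem_longSet] at hi
    exact hi (by simpa [Perm.mul_apply] using Equiv.ext_iff.1 h1 i)
  · intro h
    by_contra hne
    rw [Finset.not_nonempty_iff_eq_empty] at hne
    apply h
    rw [Equiv.ext_iff]
    intro i
    have hi : i ∉ longSet σ := by simp [hne]
    rw [mem_longSet, not_not] at hi
    simpa [Perm.mul_apply] using hi

/-- splice `m` into the cycle of `τ` right after `x` : `x → m → τ x`. -/
def ins (τ : Perm (Fin n)) (x m : Fin n) : Perm (Fin n) := τ * Equiv.swap x m

lemma ins_apply_x (τ : Perm (Fin n)) (x m : Fin n) (hm : τ m = m) : ins τ x m x = m := by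
  simp [ins, Perm.mul_apply, hm]

lemma ins_apply_m (τ : Perm (Fin n)) (x m : Fin n) : ins τ x m m = τ x := by
  simp [ins, Perm.mul_apply]

lemma ins_apply_other (τ : Perm (Fin n)) (x m : Fin n) {i} (hix : i ≠ x) (him : i ≠ m) :
    ins τ x m i = τ i := by
  simp [ins, Perm.mul_apply, Equiv.swap_apply_of_ne_of_ne hix him]

lemma ins_inv_m (τ : Perm (Fin n)) (x m : Fin n) (hm : τ m = m) : (ins τ x m)⁻¹ m = x := by
  rw [Perm.inv_def, Equiv.symm_apply_eq]
  exact (ins_apply_x τ x m hm).symm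

lemma ins_mul_swap (τ : Perm (Fin n)) (x m : Fin n) : ins τ x m * Equiv.swap x m = τ := by
  rw [ins, mul_assoc, Equiv.swap_mul_self, mul_one]

set_option maxHeartbeats 1000000 in
lemma ins_sq (τ : Perm (Fin n)) {m x : Fin n} (hm : τ m = m) (hxm : x ≠ m)
    (hx : τ x ≠ x) (i : Fin n) :
    ins τ x m (ins τ x m i) = i ↔ ins τ (τ x) m (ins τ (τ x) m i) = i := by
  have hx' : τ x ≠ m := by
    intro h; exact hxm (τ.injective (h.trans hm.symm))
  have hmx : m ≠ x := hxm.symm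
  have hx2 : x ≠ τ x := fun h => hx h.symm
  have h1 : ∀ z, τ z = m ↔ z = m := fun z =>
    ⟨fun h => τ.injective (h.trans hm.symm), fun h => by rw [h, hm]⟩
  have h2 : ∀ z, m = τ z ↔ m = z := fun z =>
    ⟨fun h => (τ.injective (hm.trans h)).symm ▸ rfl, fun h => by rw [← h, hm]⟩
  simp only [ins, Perm.mul_apply, swap_apply_def]
  split_ifs <;>
    first
      | (simp_all [EmbeddingLike.apply_eq_iff_eq, h1, h2]; done)
      | (rw [hm]; constructor <;> (intro hh; simp_all))

/-- key fact: the long set doesn't depend on where `m` is spliced into the cycle. -/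
lemma longSet_ins (τ : Perm (Fin n)) {m x : Fin n} (hm : τ m = m) (hxm : x ≠ m)
    (hx : τ x ≠ x) : longSet (ins τ x m) = longSet (ins τ (τ x) m) := by
  ext i
  rw [mem_longSet, mem_longSet, not_iff_not]
  exact ins_sq τ hm hxm hx i

lemma perm_apply_inv_self (σ : Perm (Fin n)) (x : Fin n) : σ (σ⁻¹ x) = x :=
  (Equiv.eq_symm_apply σ).mp rfl

lemma perm_inv_apply_self (σ : Perm (Fin n)) (x : Fin n) : σ⁻¹ (σ x) = x :=
  Equiv.Perm.inv_eq_iff_eq.mpr rfl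

lemma longSet_ins_inv (τ : Perm (Fin n)) {m x : Fin n} (hm : τ m = m) (hxm : x ≠ m)
    (hx : τ x ≠ x) : longSet (ins τ x m) = longSet (ins τ (τ⁻¹ x) m) := by
  have h1 : τ⁻¹ x ≠ m := by
    intro h
    apply hxm
    rw [← perm_apply_inv_self τ x, h, hm]
  have h2 : τ (τ⁻¹ x) ≠ τ⁻¹ x := by
    rw [perm_apply_inv_self τ]
    intro h
    apply hx
    conv_lhs => rw [h]
    rw [perm_apply_inv_self τ]
  have := longSet_ins τ hm h1 h2
  rw [perm_apply_inv_self τ] at this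
  exact this.symm

lemma max'_congr {s t : Finset (Fin n)} (hs : s.Nonempty) (ht : t.Nonempty) (h : s = t) :
    s.max' hs = t.max' ht := by subst h; rfl

end CombEkAux

namespace CombEkAux2
open CombEkAux Finset Equiv Equiv.Perm

variable {F : Type*} [Field F] {n : ℕ}

noncomputable def psi (σ : Perm (Fin n)) : Perm (Fin n) :=
  if h : (longSet σ).Nonempty then
    ins (σ * Equiv.swap (σ⁻¹ ((longSet σ).max' h)) ((longSet σ).max' h))
      ((σ * Equiv.swap (σ⁻¹ ((longSet σ).max' h)) ((longSet σ).max' h))⁻¹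
        (σ⁻¹ ((longSet σ).max' h))) ((longSet σ).max' h)
  else σ

noncomputable def psi' (σ : Perm (Fin n)) : Perm (Fin n) :=
  if h : (longSet σ).Nonempty then
    ins (σ * Equiv.swap (σ⁻¹ ((longSet σ).max' h)) ((longSet σ).max' h))
      (σ ((longSet σ).max' h)) ((longSet σ).max' h)
  else σ

noncomputable def t1 (q χ : Fin n → F) (ℏ : F) (σ : Perm (Fin n)) : F :=
  if h : (longSet σ).Nonempty then
    ((Perm.sign σ : ℤ) : F) * ((ℏ / (1 - q ((longSet σ).max' h) / q (σ⁻¹ ((longSet σ).max' h)))) *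
      ∏ i ∈ univ.erase ((longSet σ).max' h),
        ent q χ ℏ ((σ * Equiv.swap (σ⁻¹ ((longSet σ).max' h)) ((longSet σ).max' h)) i) i)
  else 0

noncomputable def t2 (q χ : Fin n → F) (ℏ : F) (σ : Perm (Fin n)) : F :=
  if h : (longSet σ).Nonempty then
    ((Perm.sign σ : ℤ) : F) * ((q (σ ((longSet σ).max' h)) / q ((longSet σ).max' h)) *
        (ℏ / (1 - q (σ ((longSet σ).max' h)) / q ((longSet σ).max' h))) *
      ∏ i ∈ univ.erase ((longSet σ).max' h),
        ent q χ ℏ ((σ * Equiv.swap (σ⁻¹ ((longSet σ).max' h)) ((longSet σ).max' h)) i) i)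
  else 0

/-- basic facts about the distinguished point `m`, `a = σ⁻¹ m`, `b = σ m`,
`τ = σ * swap a m`. -/
lemma basics (σ : Perm (Fin n)) (h : (longSet σ).Nonempty) :
    σ ((longSet σ).max' h) ≠ (longSet σ).max' h ∧
    σ⁻¹ ((longSet σ).max' h) ≠ (longSet σ).max' h ∧
    σ⁻¹ ((longSet σ).max' h) ≠ σ ((longSet σ).max' h) ∧
    (σ * Equiv.swap (σ⁻¹ ((longSet σ).max' h)) ((longSet σ).max' h)) ((longSet σ).max' h)
      = (longSet σ).max' h ∧
    (σ * Equiv.swap (σ⁻¹ ((longSet σ).max' h)) ((longSet σ).max' h)) (σ⁻¹ ((longSet σ).max' h))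
      = σ ((longSet σ).max' h) ∧
    ins (σ * Equiv.swap (σ⁻¹ ((longSet σ).max' h)) ((longSet σ).max' h))
      (σ⁻¹ ((longSet σ).max' h)) ((longSet σ).max' h) = σ := by
  set m := (longSet σ).max' h with hm_def
  have hlong : σ (σ m) ≠ m := mem_longSet.1 ((longSet σ).max'_mem h)
  have hbm : σ m ≠ m := fun hh => hlong (by rw [hh, hh])
  have ham : σ⁻¹ m ≠ m := fun hh => hbm (by conv_lhs => rw [← hh, perm_apply_inv_self σ])
  have hab : σ⁻¹ m ≠ σ m := by
    intro hh
    apply hlong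
    rw [← hh, perm_apply_inv_self σ]
  refine ⟨hbm, ham, hab, ?_, ?_, ?_⟩
  · rw [Perm.mul_apply, Equiv.swap_apply_right, perm_apply_inv_self σ]
  · rw [Perm.mul_apply, Equiv.swap_apply_left]
  · rw [ins, mul_assoc, Equiv.swap_mul_self, mul_one]

end CombEkAux2

namespace CombEkAux2
open CombEkAux Finset Equiv Equiv.Perm

variable {F : Type*} [Field F] {n : ℕ}

lemma psi_eq (σ : Perm (Fin n)) (h : (longSet σ).Nonempty) :
    psi σ = ins (σ * Equiv.swap (σ⁻¹ ((longSet σ).max' h)) ((longSet σ).max' h))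
      ((σ * Equiv.swap (σ⁻¹ ((longSet σ).max' h)) ((longSet σ).max' h))⁻¹
        (σ⁻¹ ((longSet σ).max' h))) ((longSet σ).max' h) := by
  unfold psi; rw [dif_pos h]

lemma psi'_eq (σ : Perm (Fin n)) (h : (longSet σ).Nonempty) :
    psi' σ = ins (σ * Equiv.swap (σ⁻¹ ((longSet σ).max' h)) ((longSet σ).max' h))
      (σ ((longSet σ).max' h)) ((longSet σ).max' h) := by
  unfold psi'; rw [dif_pos h]

lemma psi_longSet (σ : Perm (Fin n)) (h : (longSet σ).Nonempty) :
    longSet (psi σ) = longSet σ := by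
  obtain ⟨hbm, ham, hab, hτm, hτa, hins⟩ := basics σ h
  rw [psi_eq σ h]
  have := longSet_ins_inv (σ * Equiv.swap (σ⁻¹ ((longSet σ).max' h)) ((longSet σ).max' h))
    (x := σ⁻¹ ((longSet σ).max' h)) hτm ham (by rw [hτa]; exact fun hh => hab hh.symm)
  rw [hins] at this
  exact this.symm

lemma psi_nonempty (σ : Perm (Fin n)) (h : (longSet σ).Nonempty) :
    (longSet (psi σ)).Nonempty := by rw [psi_longSet σ h]; exact h

lemma psi_max (σ : Perm (Fin n)) (h : (longSet σ).Nonempty)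
    (h' : (longSet (psi σ)).Nonempty) :
    (longSet (psi σ)).max' h' = (longSet σ).max' h :=
  max'_congr _ _ (psi_longSet σ h)

lemma psi_inv_m (σ : Perm (Fin n)) (h : (longSet σ).Nonempty) :
    (psi σ)⁻¹ ((longSet σ).max' h)
      = (σ * Equiv.swap (σ⁻¹ ((longSet σ).max' h)) ((longSet σ).max' h))⁻¹
          (σ⁻¹ ((longSet σ).max' h)) := by
  obtain ⟨hbm, ham, hab, hτm, hτa, hins⟩ := basics σ h
  rw [psi_eq σ h]
  exact ins_inv_m _ _ _ hτm

lemma psi_apply_m (σ : Perm (Fin n)) (h : (longSet σ).Nonempty) :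
    psi σ ((longSet σ).max' h) = σ⁻¹ ((longSet σ).max' h) := by
  obtain ⟨hbm, ham, hab, hτm, hτa, hins⟩ := basics σ h
  rw [psi_eq σ h, ins_apply_m, perm_apply_inv_self]

lemma psi_tau (σ : Perm (Fin n)) (h : (longSet σ).Nonempty) :
    psi σ * Equiv.swap ((psi σ)⁻¹ ((longSet σ).max' h)) ((longSet σ).max' h)
      = σ * Equiv.swap (σ⁻¹ ((longSet σ).max' h)) ((longSet σ).max' h) := by
  rw [psi_inv_m σ h, psi_eq σ h, ins_mul_swap]

lemma psi_sign (σ : Perm (Fin n)) (h : (longSet σ).Nonempty) :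
    Perm.sign (psi σ) = Perm.sign σ := by
  obtain ⟨hbm, ham, hab, hτm, hτa, hins⟩ := basics σ h
  have h1 : (σ * Equiv.swap (σ⁻¹ ((longSet σ).max' h)) ((longSet σ).max' h))⁻¹
      (σ⁻¹ ((longSet σ).max' h)) ≠ (longSet σ).max' h := by
    intro hh
    apply ham
    have h2 := congrArg (σ * Equiv.swap (σ⁻¹ ((longSet σ).max' h)) ((longSet σ).max' h)) hh
    rw [perm_apply_inv_self, hτm] at h2
    exact h2
  rw [psi_eq σ h, ins, Perm.sign_mul, Perm.sign_swap h1]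
  conv_rhs => rw [← hins]
  rw [ins, Perm.sign_mul, Perm.sign_swap ham]
  conv_rhs => rw [mul_assoc, Equiv.swap_mul_self, mul_one]
  rw [mul_neg_one, mul_neg_one, neg_neg]

lemma psi'_psi (σ : Perm (Fin n)) (h : (longSet σ).Nonempty) :
    psi' (psi σ) = σ := by
  obtain ⟨hbm, ham, hab, hτm, hτa, hins⟩ := basics σ h
  rw [psi'_eq (psi σ) (psi_nonempty σ h)]
  rw [psi_max σ h, psi_tau σ h, psi_apply_m σ h, hins]

lemma psi'_longSet (σ : Perm (Fin n)) (h : (longSet σ).Nonempty) :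
    longSet (psi' σ) = longSet σ := by
  obtain ⟨hbm, ham, hab, hτm, hτa, hins⟩ := basics σ h
  rw [psi'_eq σ h]
  have := longSet_ins (σ * Equiv.swap (σ⁻¹ ((longSet σ).max' h)) ((longSet σ).max' h))
    (x := σ⁻¹ ((longSet σ).max' h)) hτm ham (by rw [hτa]; exact fun hh => hab hh.symm)
  rw [hins, hτa] at this
  exact this.symm

lemma psi'_nonempty (σ : Perm (Fin n)) (h : (longSet σ).Nonempty) :
    (longSet (psi' σ)).Nonempty := by rw [psi'_longSet σ h]; exact h

lemma psi'_max (σ : Perm (Fin n)) (h : (longSet σ).Nonempty)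
    (h' : (longSet (psi' σ)).Nonempty) :
    (longSet (psi' σ)).max' h' = (longSet σ).max' h :=
  max'_congr _ _ (psi'_longSet σ h)

lemma psi_psi' (σ : Perm (Fin n)) (h : (longSet σ).Nonempty) :
    psi (psi' σ) = σ := by
  obtain ⟨hbm, ham, hab, hτm, hτa, hins⟩ := basics σ h
  set m := (longSet σ).max' h with hm_def
  set τ := σ * Equiv.swap (σ⁻¹ m) m with hτ_def
  have hinv : (psi' σ)⁻¹ m = σ m := by
    rw [psi'_eq σ h]
    exact ins_inv_m _ _ _ hτm
  have htau : psi' σ * Equiv.swap ((psi' σ)⁻¹ m) m = τ := by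
    rw [hinv, psi'_eq σ h, ins_mul_swap]
  have hτinv : τ⁻¹ (σ m) = σ⁻¹ m := by
    rw [← hτa, perm_inv_apply_self]
  rw [psi_eq (psi' σ) (psi'_nonempty σ h)]
  rw [psi'_max σ h, htau, hinv, hτinv, hins]

end CombEkAux2

namespace CombEkAux2
open CombEkAux Finset Equiv Equiv.Perm

variable {F : Type*} [Field F] {n : ℕ}

lemma one_sub_div (A B : F) (hB : B ≠ 0) : (1 : F) - A / B = (B - A) / B := by
  field_simp

lemma one_sub_div_ne (A B : F) (hB : B ≠ 0) (hAB : A ≠ B) : (1 : F) - A / B ≠ 0 := by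
  rw [one_sub_div A B hB]
  exact div_ne_zero (sub_ne_zero.2 (Ne.symm hAB)) hB

lemma key_id (ℏ A B M R S : F) (hA : A ≠ 0) (hB : B ≠ 0) (hM : M ≠ 0)
    (hBA : B ≠ A) (hMA : M ≠ A) (hBM : B ≠ M) :
    S * (ℏ / (1 - M / A) * (ℏ / (1 - B / M) * R))
      = S * (ℏ / (1 - M / A) * (ℏ / (1 - B / A) * R))
        + S * (B / M * (ℏ / (1 - B / M)) * (ℏ / (1 - B / A) * R)) := by
  have hMA' : A - M ≠ 0 := sub_ne_zero.2 (Ne.symm hMA)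
  have hBM' : M - B ≠ 0 := sub_ne_zero.2 (Ne.symm hBM)
  have hBA' : A - B ≠ 0 := sub_ne_zero.2 (Ne.symm hBA)
  rw [one_sub_div M A hA, one_sub_div B M hM, one_sub_div B A hA]
  simp only [div_div_eq_mul_div]
  field_simp
  ring

lemma cancel_id (ℏ A M X S : F) (hA : A ≠ 0) (hM : M ≠ 0) (hAM : A ≠ M) :
    S * (A / M * (ℏ / (1 - A / M)) * X) = -(S * (ℏ / (1 - M / A) * X)) := by
  have h1 : M - A ≠ 0 := sub_ne_zero.2 (Ne.symm hAM)
  have h2 : A - M ≠ 0 := sub_ne_zero.2 hAM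
  rw [one_sub_div A M hM, one_sub_div M A hA]
  simp only [div_div_eq_mul_div]
  field_simp
  ring

lemma w_split (q χ : Fin n → F) (ℏ : F) (hq0 : ∀ i, q i ≠ 0) (hq : Function.Injective q)
    (σ : Perm (Fin n)) (h : (longSet σ).Nonempty) :
    ((Perm.sign σ : ℤ) : F) * ∏ i, ent q χ ℏ (σ i) i = t1 q χ ℏ σ + t2 q χ ℏ σ := by
  obtain ⟨hbm, ham, hab, hτm, hτa, hins⟩ := basics σ h
  rw [t1, t2, dif_pos h, dif_pos h]
  set m := (longSet σ).max' h with hm_def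
  set a := σ⁻¹ m with ha_def
  set τ := σ * Equiv.swap a m with hτ_def
  set R := ∏ i ∈ (univ.erase m).erase a, ent q χ ℏ (σ i) i with hR_def
  have hσa : σ a = m := perm_apply_inv_self σ m
  have hma : m ≠ a := fun hh => ham hh.symm
  -- the τ-product
  have hU : ∏ i ∈ univ.erase m, ent q χ ℏ (τ i) i
      = (ℏ / (1 - q (σ m) / q a)) * R := by
    rw [← Finset.mul_prod_erase (univ.erase m) _
      (Finset.mem_erase.2 ⟨ham, mem_univ a⟩), hτa]
    congr 1
    · rw [ent, if_neg (fun hh => hab hh.symm)]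
    · refine Finset.prod_congr rfl fun i hi => ?_
      simp only [Finset.mem_erase] at hi
      have : τ i = σ i := by
        rw [hτ_def, Perm.mul_apply, Equiv.swap_apply_of_ne_of_ne hi.1 hi.2.1]
      rw [this]
  -- the σ-product
  have hP : ∏ i, ent q χ ℏ (σ i) i
      = (ℏ / (1 - q m / q a)) * ((ℏ / (1 - q (σ m) / q m)) * R) := by
    rw [← Finset.mul_prod_erase univ _ (mem_univ a), hσa,
      ← Finset.mul_prod_erase (univ.erase a) _
        (Finset.mem_erase.2 ⟨hma, mem_univ m⟩)]
    rw [Finset.erase_right_comm]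
    congr 1
    · rw [ent, if_neg hma]
    rw [← hR_def]
    congr 1
    rw [ent, if_neg hbm]
  rw [hP, hU]
  exact key_id ℏ (q a) (q (σ m)) (q m) R _ (hq0 a) (hq0 (σ m)) (hq0 m)
    (hq.ne (fun hh => hab hh.symm)) (hq.ne hma) (hq.ne hbm)

lemma t2_psi (q χ : Fin n → F) (ℏ : F) (hq0 : ∀ i, q i ≠ 0) (hq : Function.Injective q)
    (σ : Perm (Fin n)) (h : (longSet σ).Nonempty) :
    t2 q χ ℏ (psi σ) = -(t1 q χ ℏ σ) := by
  obtain ⟨hbm, ham, hab, hτm, hτa, hins⟩ := basics σ h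
  rw [t1, t2, dif_pos h, dif_pos (psi_nonempty σ h)]
  rw [psi_max σ h (psi_nonempty σ h)]
  rw [psi_tau σ h, psi_apply_m σ h, psi_sign σ h]
  exact cancel_id ℏ (q (σ⁻¹ ((longSet σ).max' h))) (q ((longSet σ).max' h)) _ _
    (hq0 _) (hq0 _) (hq.ne ham)

end CombEkAux2

namespace CombEkAux2
open CombEkAux Finset Equiv Equiv.Perm

variable {F : Type*} [Field F] {n : ℕ}

lemma sum_B (q χ : Fin n → F) (ℏ : F) (hq0 : ∀ i, q i ≠ 0) (hq : Function.Injective q) :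
    ∑ σ ∈ univ.filter (fun σ : Perm (Fin n) => ¬ σ * σ = 1),
      (((Perm.sign σ : ℤ) : F) * ∏ i, ent q χ ℏ (σ i) i) = 0 := by
  have hmem : ∀ σ : Perm (Fin n),
      σ ∈ univ.filter (fun σ : Perm (Fin n) => ¬ σ * σ = 1) ↔ (longSet σ).Nonempty := by
    intro σ
    rw [Finset.mem_filter, longSet_nonempty_iff]
    simp
  rw [Finset.sum_congr rfl (fun σ hσ => w_split q χ ℏ hq0 hq σ ((hmem σ).1 hσ))]
  rw [Finset.sum_add_distrib]
  have key : ∑ σ ∈ univ.filter (fun σ : Perm (Fin n) => ¬ σ * σ = 1), t2 q χ ℏ σ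
      = ∑ σ ∈ univ.filter (fun σ : Perm (Fin n) => ¬ σ * σ = 1), t2 q χ ℏ (psi σ) := by
    refine Finset.sum_nbij' (i := psi') (j := psi) ?_ ?_ ?_ ?_ ?_
    · intro σ hσ
      rw [hmem]
      rw [psi'_longSet σ ((hmem σ).1 hσ)]
      exact (hmem σ).1 hσ
    · intro σ hσ
      rw [hmem]
      rw [psi_longSet σ ((hmem σ).1 hσ)]
      exact (hmem σ).1 hσ
    · intro σ hσ
      exact psi_psi' σ ((hmem σ).1 hσ)
    · intro σ hσ
      exact psi'_psi σ ((hmem σ).1 hσ)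
    · intro σ hσ
      rw [psi_psi' σ ((hmem σ).1 hσ)]
  rw [key, Finset.sum_congr rfl (fun σ hσ => t2_psi q χ ℏ hq0 hq σ ((hmem σ).1 hσ)),
    Finset.sum_neg_distrib, add_neg_cancel]

end CombEkAux2

namespace CombEkAux2
open CombEkAux Finset Equiv Equiv.Perm

variable {F : Type*} [Field F] {n : ℕ}

lemma sign_invol : ∀ (k : ℕ) (σ : Perm (Fin n)), σ * σ = 1 →
    (univ.filter fun i => i < σ i).card = k → Perm.sign σ = (-1) ^ k := by
  intro k
  induction k with
  | zero =>
    intro σ hσ hk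
    have hP : (univ.filter fun i => i < σ i) = ∅ := Finset.card_eq_zero.1 hk
    have hσσ : ∀ i, σ (σ i) = i := fun i => by
      simpa [Perm.mul_apply] using Equiv.ext_iff.1 hσ i
    have : σ = 1 := by
      rw [Equiv.ext_iff]
      intro i
      by_contra hi
      rcases (show σ i ≠ i by simpa using hi).lt_or_gt with h1 | h2
      · have : σ i ∈ univ.filter fun i => i < σ i := by
          rw [mem_filter]
          refine ⟨mem_univ _, ?_⟩
          rw [hσσ i] at *
          exact h1
        rw [hP] at this
        exact absurd this (Finset.notMem_empty _)
      · have : i ∈ univ.filter fun i => i < σ i := by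
          rw [mem_filter]
          exact ⟨mem_univ _, h2⟩
        rw [hP] at this
        exact absurd this (Finset.notMem_empty _)
    rw [this, Perm.sign_one, pow_zero]
  | succ k ih =>
    intro σ hσ hk
    have hσσ : ∀ i, σ (σ i) = i := fun i => by
      simpa [Perm.mul_apply] using Equiv.ext_iff.1 hσ i
    have hne : (univ.filter fun i => i < σ i).Nonempty :=
      Finset.card_pos.1 (by rw [hk]; exact k.succ_pos)
    obtain ⟨j, hj⟩ := hne
    have hjlt : j < σ j := (mem_filter.1 hj).2
    have hjne : j ≠ σ j := ne_of_lt hjlt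
    have happ : ∀ i, i ≠ j → i ≠ σ j → (σ * Equiv.swap j (σ j)) i = σ i := fun i h1 h2 => by
      rw [Perm.mul_apply, swap_apply_of_ne_of_ne h1 h2]
    have hj1 : (σ * Equiv.swap j (σ j)) j = j := by
      rw [Perm.mul_apply, swap_apply_left, hσσ]
    have hj2 : (σ * Equiv.swap j (σ j)) (σ j) = σ j := by
      rw [Perm.mul_apply, swap_apply_right]
    have hinv : (σ * Equiv.swap j (σ j)) * (σ * Equiv.swap j (σ j)) = 1 := by
      rw [Equiv.ext_iff]
      intro i
      rw [Perm.mul_apply, Perm.one_apply]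
      rcases eq_or_ne i j with rfl | h1
      · rw [hj1, hj1]
      rcases eq_or_ne i (σ j) with rfl | h2
      · rw [hj2, hj2]
      rw [happ i h1 h2]
      have g1 : σ i ≠ j := fun hh => h2 (by rw [← hσσ i, hh])
      have g2 : σ i ≠ σ j := fun hh => h1 (σ.injective hh)
      rw [happ _ g1 g2, hσσ]
    have hfil : (univ.filter fun i => i < (σ * Equiv.swap j (σ j)) i)
        = (univ.filter fun i => i < σ i).erase j := by
      ext i
      rw [Finset.mem_erase, mem_filter, mem_filter]
      rcases eq_or_ne i j with rfl | h1
      · simp [hj1, lt_irrefl]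
      rcases eq_or_ne i (σ j) with rfl | h2
      · rw [hj2]
        constructor
        · rintro ⟨-, hcon⟩
          exact absurd hcon (lt_irrefl _)
        · rintro ⟨-, -, hcon⟩
          rw [hσσ] at hcon
          exact absurd hcon (not_lt_of_gt hjlt)
      · rw [happ i h1 h2]
        simp [h1]
    have hcard : (univ.filter fun i => i < (σ * Equiv.swap j (σ j)) i).card = k := by
      rw [hfil, Finset.card_erase_of_mem hj, hk]
      rfl
    have hsign' := ih _ hinv hcard
    have hss : σ = (σ * Equiv.swap j (σ j)) * Equiv.swap j (σ j) := by
      rw [mul_assoc, Equiv.swap_mul_self, mul_one]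
    conv_lhs => rw [hss]
    rw [Perm.sign_mul, hsign', Perm.sign_swap hjne, pow_succ]

lemma pair_id (ℏ x y : F) (hx : x ≠ 0) (hy : y ≠ 0) (hxy : x ≠ y) :
    -(ℏ / (1 - y / x) * (ℏ / (1 - x / y))) = ℏ ^ 2 * x * y / (x - y) ^ 2 := by
  have h1 : x - y ≠ 0 := sub_ne_zero.2 hxy
  have h2 : y - x ≠ 0 := sub_ne_zero.2 (Ne.symm hxy)
  rw [one_sub_div y x hx, one_sub_div x y hy]
  simp only [div_div_eq_mul_div]
  field_simp
  ring

lemma invol_term (q χ : Fin n → F) (ℏ : F) (hq0 : ∀ i, q i ≠ 0)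
    (hq : Function.Injective q) (σ : Perm (Fin n)) (hσ : σ * σ = 1) :
    ((Perm.sign σ : ℤ) : F) * ∏ i, ent q χ ℏ (σ i) i
      = (∏ i ∈ univ.filter (fun i => σ i = i), χ i) *
        ∏ i ∈ univ.filter (fun i => i < σ i),
          ℏ ^ 2 * q i * q (σ i) / (q i - q (σ i)) ^ 2 := by
  have hσσ : ∀ i, σ (σ i) = i := fun i => by
    simpa [Perm.mul_apply] using Equiv.ext_iff.1 hσ i
  have hsplit : ∏ i, ent q χ ℏ (σ i) i
      = (∏ i ∈ univ.filter (fun i => σ i = i), ent q χ ℏ (σ i) i) *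
        ∏ i ∈ univ.filter (fun i => ¬ σ i = i), ent q χ ℏ (σ i) i :=
    (Finset.prod_filter_mul_prod_filter_not univ _ _).symm
  have hfix : ∏ i ∈ univ.filter (fun i => σ i = i), ent q χ ℏ (σ i) i
      = ∏ i ∈ univ.filter (fun i => σ i = i), χ i :=
    Finset.prod_congr rfl fun i hi => by rw [ent, if_pos (mem_filter.1 hi).2]
  have hPQ : univ.filter (fun i : Fin n => ¬ σ i = i)
      = univ.filter (fun i : Fin n => i < σ i) ∪ univ.filter (fun i : Fin n => σ i < i) := by
    ext i
    simp only [Finset.mem_union, mem_filter, mem_univ, true_and]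
    constructor
    · intro hh
      rcases (show σ i ≠ i from hh).lt_or_gt with h1 | h2
      · exact Or.inr h1
      · exact Or.inl h2
    · rintro (h1 | h2)
      · exact ne_of_gt h1
      · exact ne_of_lt h2
  have hdisj : Disjoint (univ.filter (fun i : Fin n => i < σ i))
      (univ.filter (fun i : Fin n => σ i < i)) := by
    rw [Finset.disjoint_left]
    intro i hi1 hi2
    rw [mem_filter] at hi1 hi2
    exact absurd hi2.2 (not_lt_of_gt hi1.2)
  have hQP : univ.filter (fun i : Fin n => σ i < i)
      = (univ.filter (fun i : Fin n => i < σ i)).image σ := by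
    ext x
    simp only [Finset.mem_image, mem_filter, mem_univ, true_and]
    constructor
    · intro hh
      exact ⟨σ x, by rw [hσσ]; exact hh, hσσ x⟩
    · rintro ⟨y, hy, rfl⟩
      rw [hσσ]
      exact hy
  have himg : ∏ i ∈ (univ.filter (fun i : Fin n => i < σ i)).image σ, ent q χ ℏ (σ i) i
      = ∏ i ∈ univ.filter (fun i : Fin n => i < σ i), ent q χ ℏ i (σ i) := by
    rw [Finset.prod_image (fun x _ y _ hxy => σ.injective hxy)]
    exact Finset.prod_congr rfl fun i _ => by rw [hσσ]
  have hsgn : ((Perm.sign σ : ℤ) : F)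
      = (-1 : F) ^ (univ.filter (fun i : Fin n => i < σ i)).card := by
    rw [sign_invol _ σ hσ rfl]
    push_cast
    rfl
  rw [hsplit, hfix, hPQ, Finset.prod_union hdisj, hQP, himg, hsgn]
  have hmain : (-1 : F) ^ (univ.filter (fun i : Fin n => i < σ i)).card *
      ((∏ i ∈ univ.filter (fun i : Fin n => i < σ i), ent q χ ℏ (σ i) i) *
        ∏ i ∈ univ.filter (fun i : Fin n => i < σ i), ent q χ ℏ i (σ i))
      = ∏ i ∈ univ.filter (fun i : Fin n => i < σ i),
          ℏ ^ 2 * q i * q (σ i) / (q i - q (σ i)) ^ 2 := by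
    rw [← Finset.prod_mul_distrib, ← Finset.prod_const (-1 : F), ← Finset.prod_mul_distrib]
    refine Finset.prod_congr rfl fun i hi => ?_
    have hlt : i < σ i := (mem_filter.1 hi).2
    rw [ent, ent, if_neg (ne_of_gt hlt), if_neg (ne_of_lt hlt), neg_one_mul]
    exact pair_id ℏ (q i) (q (σ i)) (hq0 i) (hq0 (σ i)) (hq.ne (ne_of_lt hlt))
  rw [← hmain]
  ring

end CombEkAux2

/-- (Theorem `combforEk` for `k = n`.) For nonzero pairwise distinct
`q 1, …, q n` in a field `F`, `χ 1, …, χ n ∈ F` and `ℏ ∈ F`, the determinant of the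
matrix `M(χ)` with diagonal entries `χ i` and off-diagonal entries `ℏ/(1 - q i / q j)`
equals the sum over all involutions (matchings) `π` of `{1,…,n}` of `J(π) * V(π)`, where
`J(π) = ∏_{π i = i} χ i` and `V(π) = ∏_{i < π i} ℏ² q i q (π i)/(q i - q (π i))²`. -/
theorem det_M_chi_eq_sum_matchings {F : Type*} [Field F] (n : ℕ)
    (q χ : Fin n → F) (ℏ : F)
    (hq0 : ∀ i, q i ≠ 0) (hq : Function.Injective q) :
    Matrix.det (Matrix.of fun i j : Fin n =>
      if i = j then χ i else ℏ / (1 - q i / q j)) =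
    ∑ π ∈ Finset.univ.filter (fun π : Equiv.Perm (Fin n) => π * π = 1),
      (∏ i ∈ Finset.univ.filter (fun i : Fin n => π i = i), χ i) *
      (∏ i ∈ Finset.univ.filter (fun i : Fin n => i < π i),
        ℏ ^ 2 * q i * q (π i) / (q i - q (π i)) ^ 2) := by
  classical
  rw [Matrix.det_apply']
  have hent : ∀ σ : Equiv.Perm (Fin n),
      (∏ i, (Matrix.of fun i j : Fin n =>
        if i = j then χ i else ℏ / (1 - q i / q j)) (σ i) i)
      = ∏ i, CombEkAux.ent q χ ℏ (σ i) i := by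
    intro σ
    refine Finset.prod_congr rfl fun i _ => ?_
    rcases eq_or_ne (σ i) i with h | h
    · simp [Matrix.of_apply, CombEkAux.ent, h]
    · simp [Matrix.of_apply, CombEkAux.ent, h]
  rw [Finset.sum_congr rfl fun σ _ => by rw [hent σ]]
  rw [← Finset.sum_filter_add_sum_filter_not Finset.univ
    (fun σ : Equiv.Perm (Fin n) => σ * σ = 1)]
  rw [CombEkAux2.sum_B q χ ℏ hq0 hq, add_zero]
  exact Finset.sum_congr rfl fun σ hσ =>
    CombEkAux2.invol_term q χ ℏ hq0 hq σ (Finset.mem_filter.1 hσ).2
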